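/- Let α₂ > 0, r > 1, T > 0 and κ ∈ [1/(2r), 1/(2r-2)] be real numbers, and let f(x) = -α₂ x^r for x > 0. For every step size 0 < h ≤ T define 𝒫_h(x) = min{x, h^{-κ}}. Then for all x, y > 0, |f(𝒫_h(x)) - f(𝒫_h(y))| ≤ α₂ r h^{-κ(r-1)} |x - y| ≤ α₂ r T^{(1 - κ(2r-2))/2} h^{-1/2} |x - y|. -/

import Mathlib

open Real

lemma rpow_lip (r M : ℝ) (hr : 1 < r) (hM : 0 < M) {a b : ℝ}
    (ha : a ∈ Set.Icc (0:ℝ) M) (hb : b ∈ Set.Icc (0:ℝ) M) :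
    |a ^ r - b ^ r| ≤ r * M ^ (r - 1) * |a - b| := by
  have hconv : Convex ℝ (Set.Icc (0:ℝ) M) := convex_Icc _ _
  have h := hconv.norm_image_sub_le_of_norm_hasDerivWithin_le
    (f := fun x => x ^ r) (f' := fun x => r * x ^ (r - 1))
    (fun x hx => (Real.hasDerivAt_rpow_const (Or.inr hr.le)).hasDerivWithinAt)
    (C := r * M ^ (r - 1)) ?_ hb ha
  · simpa [Real.norm_eq_abs] using h
  · intro x hx
    rw [Real.norm_eq_abs, abs_of_nonneg (mul_nonneg (by linarith) (Real.rpow_nonneg hx.1 _))]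
    have : x ^ (r - 1) ≤ M ^ (r - 1) :=
      Real.rpow_le_rpow hx.1 hx.2 (by linarith)
    nlinarith [hr]

lemma min_lip (x y M : ℝ) : |min x M - min y M| ≤ |x - y| := by
  rcases le_total x M with h1 | h1 <;> rcases le_total y M with h2 | h2 <;>
    simp [min_eq_left, min_eq_right, h1, h2, abs_le] <;>
    cases abs_le.mp (le_refl |x - y|) <;> constructor <;>
    simp -failIfUnchanged only [abs_sub_comm] at * <;> nlinarith [abs_nonneg (x - y), le_abs_self (x - y), neg_abs_le (x - y), le_abs_self (y - x), neg_abs_le (y - x)]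

theorem stmt_12 (α₂ r T κ h : ℝ) (hα₂ : 0 < α₂) (hr : 1 < r) (hT : 0 < T)
    (hκ₁ : 1 / (2 * r) ≤ κ) (hκ₂ : κ ≤ 1 / (2 * r - 2)) (hh : 0 < h) (hhT : h ≤ T) :
    ∀ x : ℝ, 0 < x → ∀ y : ℝ, 0 < y →
      |(-α₂ * (min x (h ^ (-κ))) ^ r) - (-α₂ * (min y (h ^ (-κ))) ^ r)|
          ≤ α₂ * r * h ^ (-(κ * (r - 1))) * |x - y|
        ∧ α₂ * r * h ^ (-(κ * (r - 1))) * |x - y|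
          ≤ α₂ * r * T ^ ((1 - κ * (2 * r - 2)) / 2) * h ^ (-(1 : ℝ) / 2) * |x - y| := by
  intro x hx y hy
  set M := h ^ (-κ) with hM
  have hMpos : 0 < M := Real.rpow_pos_of_pos hh _
  have hκpos : 0 < κ := lt_of_lt_of_le (by positivity) hκ₁
  constructor
  · have key := rpow_lip r M hr hMpos
      (a := min x M) (b := min y M)
      ⟨le_min hx.le hMpos.le, min_le_right _ _⟩
      ⟨le_min hy.le hMpos.le, min_le_right _ _⟩
    have hmin := min_lip x y M
    have hMr : M ^ (r - 1) = h ^ (-(κ * (r - 1))) := by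
      rw [hM, ← Real.rpow_mul hh.le]; ring_nf
    calc |(-α₂ * (min x M) ^ r) - (-α₂ * (min y M) ^ r)|
        = α₂ * |(min x M) ^ r - (min y M) ^ r| := by
          rw [show (-α₂ * (min x M) ^ r) - (-α₂ * (min y M) ^ r)
            = α₂ * ((min y M) ^ r - (min x M) ^ r) by ring, abs_mul,
            abs_of_pos hα₂, abs_sub_comm]
      _ ≤ α₂ * (r * M ^ (r - 1) * |min x M - min y M|) := by
          exact mul_le_mul_of_nonneg_left key hα₂.le
      _ ≤ α₂ * (r * M ^ (r - 1) * |x - y|) := by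
          have : (0:ℝ) ≤ r * M ^ (r - 1) := by positivity
          exact mul_le_mul_of_nonneg_left (mul_le_mul_of_nonneg_left hmin this) hα₂.le
      _ = α₂ * r * h ^ (-(κ * (r - 1))) * |x - y| := by rw [hMr]; ring
  · have h1 : h ^ (-(κ * (r - 1))) = h ^ ((1 - κ * (2 * r - 2)) / 2) * h ^ (-(1:ℝ)/2) := by
      rw [← Real.rpow_add hh]; ring_nf
    have hexp : 0 ≤ (1 - κ * (2 * r - 2)) / 2 := by
      have h2r : 0 < 2 * r - 2 := by linarith
      have hle : κ * (2 * r - 2) ≤ 1 := (le_div_iff₀ h2r).mp hκ₂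
      linarith
    have h2 : h ^ ((1 - κ * (2 * r - 2)) / 2) ≤ T ^ ((1 - κ * (2 * r - 2)) / 2) :=
      Real.rpow_le_rpow hh.le hhT hexp
    have h3 : (0:ℝ) ≤ h ^ (-(1:ℝ)/2) := (Real.rpow_pos_of_pos hh _).le
    rw [h1]
    have := mul_le_mul_of_nonneg_right h2 h3
    nlinarith [abs_nonneg (x - y), mul_le_mul_of_nonneg_right this (abs_nonneg (x - y)), mul_pos hα₂ (lt_trans one_pos hr)]
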